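/- Suppose data U_j^k = u(x_j,t_k) + ε_j^k with |ε_j^k| ≤ ε. Then the error e^{noise} of the weak-form linear system with a true k-sparse coefficient vector c* satisfies ‖e^{noise}‖_∞ ≤ S̄* · max_h |Ω_h| · ε + O(ε²), where S̄* = max_h sup_{(x_j,t_k)∈Ω_h} |∑_{l∈Supp*} (-1)^{α_l} c_l* β_l (U_j^k)^{β_l-1} ∂_x^{α_l}φ(x_j,t_k) - ∂_t φ(x_j,t_k)|; that is, the noise-induced error is first-order in ε with Lipschitz constant S̄* max_h|Ω_h|, independent of the derivative orders α_l appearing in the PDE. -/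

import Mathlib

lemma pow_lip (M : ℝ) (hM : 1 ≤ M) : ∀ (n : ℕ) (a b : ℝ), |a| ≤ M → |b| ≤ M →
    |a ^ n - b ^ n| ≤ (n : ℝ) * M ^ n * |a - b| := by
  intro n
  induction n with
  | zero => intro a b _ _; simp
  | succ m ih =>
    intro a b ha hb
    have hM0 : (0:ℝ) ≤ M := by linarith
    have hMp : (0:ℝ) ≤ M ^ m := pow_nonneg hM0 m
    have h1 : |a ^ (m + 1) - b ^ (m + 1)| ≤ |a| * |a ^ m - b ^ m| + |a - b| * |b| ^ m := by
      have key : a ^ (m + 1) - b ^ (m + 1) = a * (a ^ m - b ^ m) + (a - b) * b ^ m := by ring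
      rw [key]
      refine (abs_add_le _ _).trans ?_
      rw [abs_mul, abs_mul, abs_pow]
    have h2 : |a| * |a ^ m - b ^ m| ≤ M * ((m : ℝ) * M ^ m * |a - b|) :=
      mul_le_mul ha (ih a b ha hb) (abs_nonneg _) hM0
    have h3 : |a - b| * |b| ^ m ≤ |a - b| * M ^ m := by gcongr
    have h4 : M ^ m ≤ M * M ^ m := le_mul_of_one_le_left hMp hM
    have h5 : |a - b| * M ^ m ≤ |a - b| * (M * M ^ m) :=
      mul_le_mul_of_nonneg_left h4 (abs_nonneg _)
    have h6 : ((m + 1 : ℕ) : ℝ) * M ^ (m + 1) * |a - b|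
        = M * ((m : ℝ) * M ^ m * |a - b|) + |a - b| * (M * M ^ m) := by
      push_cast
      rw [pow_succ]
      ring
    linarith

lemma taylor_pow (M : ℝ) (hM : 1 ≤ M) (n : ℕ) (v e : ℝ) (hv : |v| ≤ M) (hu : |v - e| ≤ M) :
    |(v - e) ^ n - v ^ n + (n : ℝ) * v ^ (n - 1) * e| ≤ (n : ℝ) ^ 2 * M ^ n * M ^ n * e ^ 2 := by
  have hM0 : (0:ℝ) ≤ M := by linarith
  rcases Nat.eq_zero_or_pos n with hn | hn
  · subst hn; simp
  set S : ℝ := ∑ i ∈ Finset.range n, v ^ i * (v - e) ^ (n - 1 - i) with hS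
  have hgeom : S * e = v ^ n - (v - e) ^ n := by
    have := geom_sum₂_mul v (v - e) n
    simpa using this
  have hident : (v - e) ^ n - v ^ n + (n : ℝ) * v ^ (n - 1) * e
      = ((n : ℝ) * v ^ (n - 1) - S) * e := by linear_combination hgeom
  have hsum : (n : ℝ) * v ^ (n - 1) - S
      = ∑ i ∈ Finset.range n, (v ^ (n - 1) - v ^ i * (v - e) ^ (n - 1 - i)) := by
    rw [Finset.sum_sub_distrib, Finset.sum_const, Finset.card_range, nsmul_eq_mul]
  have hterm : ∀ i ∈ Finset.range n,
      |v ^ (n - 1) - v ^ i * (v - e) ^ (n - 1 - i)| ≤ M ^ n * ((n : ℝ) * M ^ n * |e|) := by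
    intro i hi
    have hin : i < n := Finset.mem_range.mp hi
    have hsplit : v ^ (n - 1) = v ^ i * v ^ (n - 1 - i) := by
      rw [← pow_add]
      congr 1
      omega
    rw [hsplit, ← mul_sub, abs_mul, abs_pow]
    have hlip : |v ^ (n - 1 - i) - (v - e) ^ (n - 1 - i)|
        ≤ ((n - 1 - i : ℕ) : ℝ) * M ^ (n - 1 - i) * |v - (v - e)| :=
      pow_lip M hM (n - 1 - i) v (v - e) hv hu
    have he : |v - (v - e)| = |e| := by ring_nf
    rw [he] at hlip
    have h1 : ((n - 1 - i : ℕ) : ℝ) * M ^ (n - 1 - i) * |e| ≤ (n : ℝ) * M ^ n * |e| := by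
      gcongr
      · exact_mod_cast Nat.le_of_lt (by omega)
      · omega
    have h2 : |v| ^ i ≤ M ^ n := by
      have h2a : |v| ^ i ≤ M ^ i := by gcongr
      have h2b : M ^ i ≤ M ^ n := pow_le_pow_right₀ hM (by omega)
      linarith
    exact mul_le_mul h2 (hlip.trans h1) (abs_nonneg _) (by positivity)
  have hSb : |(n : ℝ) * v ^ (n - 1) - S| ≤ (n : ℝ) * (M ^ n * ((n : ℝ) * M ^ n * |e|)) := by
    rw [hsum]
    refine (Finset.abs_sum_le_sum_abs _ _).trans ?_
    have h6 := Finset.sum_le_sum hterm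
    rw [Finset.sum_const, Finset.card_range, nsmul_eq_mul] at h6
    exact h6
  rw [hident, abs_mul]
  have h7 := mul_le_mul_of_nonneg_right hSb (abs_nonneg e)
  have h8 : ((n : ℝ) * (M ^ n * ((n : ℝ) * M ^ n * |e|))) * |e|
      = (n : ℝ) ^ 2 * M ^ n * M ^ n * e ^ 2 := by
    rw [← sq_abs e]
    ring
  linarith

lemma pointwise_bound (Nf : ℕ) (s cc D : Fin Nf → ℝ) (β : Fin Nf → ℕ)
    (u e T Sbar Mv B' : ℝ)
    (hs : ∀ l, |s l| = 1) (hM : 1 ≤ Mv) (hu : |u| ≤ Mv) (hv : |u + e| ≤ Mv)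
    (hB0 : 0 ≤ B') (hD : ∀ l, |D l| ≤ B')
    (hSb : |(∑ l, s l * cc l * (β l : ℝ) * (u + e) ^ (β l - 1) * D l) - T| ≤ Sbar) :
    |((∑ l, s l * cc l * (u + e) ^ (β l) * D l) - (u + e) * T)
      - ((∑ l, s l * cc l * u ^ (β l) * D l) - u * T)|
    ≤ Sbar * |e| + (∑ l, |cc l| * ((β l : ℝ) ^ 2 * Mv ^ (β l) * Mv ^ (β l)) * B') * e ^ 2 := by
  have hMv0 : (0:ℝ) ≤ Mv := by linarith
  set R : Fin Nf → ℝ :=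
    fun l => u ^ β l - (u + e) ^ β l + (β l : ℝ) * (u + e) ^ (β l - 1) * e with hR
  have hRb : ∀ l, |R l| ≤ (β l : ℝ) ^ 2 * Mv ^ (β l) * Mv ^ (β l) * e ^ 2 := by
    intro l
    have h0 : (u + e) - e = u := by ring
    have := taylor_pow Mv hM (β l) (u + e) e hv (by rw [h0]; exact hu)
    rw [h0] at this
    simpa [hR] using this
  have hterm : ∀ l ∈ (Finset.univ : Finset (Fin Nf)),
      s l * cc l * (u + e) ^ (β l) * D l - s l * cc l * u ^ (β l) * D l
      = e * (s l * cc l * (β l : ℝ) * (u + e) ^ (β l - 1) * D l) - s l * cc l * R l * D l := by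
    intro l _
    simp only [hR]
    ring
  have hident : ((∑ l, s l * cc l * (u + e) ^ (β l) * D l) - (u + e) * T)
      - ((∑ l, s l * cc l * u ^ (β l) * D l) - u * T)
      = e * ((∑ l, s l * cc l * (β l : ℝ) * (u + e) ^ (β l - 1) * D l) - T)
        - ∑ l, s l * cc l * R l * D l := by
    calc ((∑ l, s l * cc l * (u + e) ^ (β l) * D l) - (u + e) * T)
        - ((∑ l, s l * cc l * u ^ (β l) * D l) - u * T)
        = (∑ l, (s l * cc l * (u + e) ^ (β l) * D l - s l * cc l * u ^ (β l) * D l)) - e * T := by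
          rw [Finset.sum_sub_distrib]
          ring
      _ = (∑ l, (e * (s l * cc l * (β l : ℝ) * (u + e) ^ (β l - 1) * D l)
            - s l * cc l * R l * D l)) - e * T := by
          rw [Finset.sum_congr rfl hterm]
      _ = e * ((∑ l, s l * cc l * (β l : ℝ) * (u + e) ^ (β l - 1) * D l) - T)
            - ∑ l, s l * cc l * R l * D l := by
          rw [Finset.sum_sub_distrib, mul_sub, Finset.mul_sum]
          ring
  rw [hident]
  have hA : |e * ((∑ l, s l * cc l * (β l : ℝ) * (u + e) ^ (β l - 1) * D l) - T)|
      ≤ Sbar * |e| := by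
    rw [abs_mul, mul_comm]
    exact mul_le_mul_of_nonneg_right hSb (abs_nonneg e)
  have hBnd : |∑ l, s l * cc l * R l * D l|
      ≤ (∑ l, |cc l| * ((β l : ℝ) ^ 2 * Mv ^ (β l) * Mv ^ (β l)) * B') * e ^ 2 := by
    refine (Finset.abs_sum_le_sum_abs _ _).trans ?_
    rw [Finset.sum_mul]
    refine Finset.sum_le_sum fun l _ => ?_
    rw [abs_mul, abs_mul, abs_mul, hs l, one_mul]
    have hK0 : (0:ℝ) ≤ (β l : ℝ) ^ 2 * Mv ^ (β l) * Mv ^ (β l) * e ^ 2 :=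
      mul_nonneg (mul_nonneg (mul_nonneg (sq_nonneg _) (pow_nonneg hMv0 _))
        (pow_nonneg hMv0 _)) (sq_nonneg e)
    have step1 : |cc l| * |R l| ≤ |cc l| * ((β l : ℝ) ^ 2 * Mv ^ (β l) * Mv ^ (β l) * e ^ 2) :=
      mul_le_mul_of_nonneg_left (hRb l) (abs_nonneg _)
    have step2 : |cc l| * |R l| * |D l|
        ≤ (|cc l| * ((β l : ℝ) ^ 2 * Mv ^ (β l) * Mv ^ (β l) * e ^ 2)) * B' :=
      mul_le_mul step1 (hD l) (abs_nonneg _) (mul_nonneg (abs_nonneg _) hK0)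
    calc |cc l| * |R l| * |D l|
        ≤ (|cc l| * ((β l : ℝ) ^ 2 * Mv ^ (β l) * Mv ^ (β l) * e ^ 2)) * B' := step2
      _ = |cc l| * ((β l : ℝ) ^ 2 * Mv ^ (β l) * Mv ^ (β l)) * B' * e ^ 2 := by ring
  calc |e * ((∑ l, s l * cc l * (β l : ℝ) * (u + e) ^ (β l - 1) * D l) - T)
        - ∑ l, s l * cc l * R l * D l|
      ≤ |e * ((∑ l, s l * cc l * (β l : ℝ) * (u + e) ^ (β l - 1) * D l) - T)|
        + |∑ l, s l * cc l * R l * D l| := abs_sub _ _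
    _ ≤ Sbar * |e| + (∑ l, |cc l| * ((β l : ℝ) ^ 2 * Mv ^ (β l) * Mv ^ (β l)) * B') * e ^ 2 :=
        add_le_add hA hBnd

/-- the noise-induced error of the weak-form linear system is first order in
the noise level `ε`, with Lipschitz constant `S̄* · max_h |Ω_h|`, up to `O(ε²)`; the bound is
independent of the derivative orders `α_l` of the features. The weak features are evaluated
by a quadrature with nonnegative weights `w h` of total mass at most `A = max_h |Ω_h|`, and
`S̄*` bounds `|∑_l (-1)^{α_l} c_l β_l (U_j^k)^{β_l-1} ∂ₓ^{α_l}φ_h(x_j,t_k) - ∂ₜφ_h(x_j,t_k)|`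
at every quadrature point of every `Ω_h`. -/
theorem stmt9 (Nx Nt H Nf : ℕ)
    (x : Fin Nx → ℝ) (t : Fin Nt → ℝ)
    (uval : Fin Nx → Fin Nt → ℝ)
    (φ : Fin H → ℝ → ℝ → ℝ)
    (w : Fin H → Fin Nx × Fin Nt → ℝ) (hw : ∀ h p, 0 ≤ w h p)
    (A : ℝ) (hA : ∀ h, ∑ p : Fin Nx × Fin Nt, w h p ≤ A)
    (α β : Fin Nf → ℕ) (hβ : ∀ l, 1 ≤ β l)
    (c : Fin Nf → ℝ) :
    ∃ C : ℝ, ∀ ε : ℝ, 0 ≤ ε → ε ≤ 1 →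
      ∀ noise : Fin Nx → Fin Nt → ℝ, (∀ j k, |noise j k| ≤ ε) →
      ∀ Sbar : ℝ, 0 ≤ Sbar →
        (∀ (h : Fin H) (j : Fin Nx) (k : Fin Nt), w h (j, k) ≠ 0 →
          |(∑ l, (-1 : ℝ) ^ (α l) * c l * (β l : ℝ) * (uval j k + noise j k) ^ (β l - 1) *
              iteratedDeriv (α l) (fun s => φ h s (t k)) (x j))
            - deriv (fun s => φ h (x j) s) (t k)| ≤ Sbar) →
      ∀ h : Fin H,
        |(∑ p : Fin Nx × Fin Nt, w h p *
            ((∑ l, (-1 : ℝ) ^ (α l) * c l * (uval p.1 p.2 + noise p.1 p.2) ^ (β l) *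
                iteratedDeriv (α l) (fun s => φ h s (t p.2)) (x p.1))
              - (uval p.1 p.2 + noise p.1 p.2) * deriv (fun s => φ h (x p.1) s) (t p.2)))
          - (∑ p : Fin Nx × Fin Nt, w h p *
            ((∑ l, (-1 : ℝ) ^ (α l) * c l * (uval p.1 p.2) ^ (β l) *
                iteratedDeriv (α l) (fun s => φ h s (t p.2)) (x p.1))
              - uval p.1 p.2 * deriv (fun s => φ h (x p.1) s) (t p.2)))|
        ≤ Sbar * A * ε + C * ε ^ 2 := by
  classical
  set M : ℝ := ∑ p : Fin Nx × Fin Nt, |uval p.1 p.2| with hMdef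
  have hM0 : (0:ℝ) ≤ M := Finset.sum_nonneg fun _ _ => abs_nonneg _
  have hMle : ∀ j k, |uval j k| ≤ M := fun j k =>
    Finset.single_le_sum (f := fun p : Fin Nx × Fin Nt => |uval p.1 p.2|)
      (fun _ _ => abs_nonneg _) (Finset.mem_univ (j, k))
  set B : ℝ := ∑ h : Fin H, ∑ p : Fin Nx × Fin Nt, ∑ l : Fin Nf,
      |iteratedDeriv (α l) (fun s => φ h s (t p.2)) (x p.1)| with hBdef
  have hB0 : (0:ℝ) ≤ B :=
    Finset.sum_nonneg fun _ _ => Finset.sum_nonneg fun _ _ =>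
      Finset.sum_nonneg fun _ _ => abs_nonneg _
  have hBle : ∀ (h : Fin H) (p : Fin Nx × Fin Nt) (l : Fin Nf),
      |iteratedDeriv (α l) (fun s => φ h s (t p.2)) (x p.1)| ≤ B := by
    intro h p l
    have h1 : |iteratedDeriv (α l) (fun s => φ h s (t p.2)) (x p.1)|
        ≤ ∑ l : Fin Nf, |iteratedDeriv (α l) (fun s => φ h s (t p.2)) (x p.1)| :=
      Finset.single_le_sum
        (f := fun l : Fin Nf => |iteratedDeriv (α l) (fun s => φ h s (t p.2)) (x p.1)|)
        (fun _ _ => abs_nonneg _) (Finset.mem_univ l)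
    have h2 : (∑ l : Fin Nf, |iteratedDeriv (α l) (fun s => φ h s (t p.2)) (x p.1)|)
        ≤ ∑ p : Fin Nx × Fin Nt, ∑ l : Fin Nf,
            |iteratedDeriv (α l) (fun s => φ h s (t p.2)) (x p.1)| :=
      Finset.single_le_sum
        (f := fun p : Fin Nx × Fin Nt =>
          ∑ l : Fin Nf, |iteratedDeriv (α l) (fun s => φ h s (t p.2)) (x p.1)|)
        (fun _ _ => Finset.sum_nonneg fun _ _ => abs_nonneg _) (Finset.mem_univ p)
    have h3 : (∑ p : Fin Nx × Fin Nt, ∑ l : Fin Nf,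
          |iteratedDeriv (α l) (fun s => φ h s (t p.2)) (x p.1)|) ≤ B :=
      Finset.single_le_sum
        (f := fun h : Fin H => ∑ p : Fin Nx × Fin Nt,
          ∑ l : Fin Nf, |iteratedDeriv (α l) (fun s => φ h s (t p.2)) (x p.1)|)
        (fun _ _ => Finset.sum_nonneg fun _ _ => Finset.sum_nonneg fun _ _ => abs_nonneg _)
        (Finset.mem_univ h)
    linarith
  set E : ℝ := ∑ l : Fin Nf,
      |c l| * ((β l : ℝ) ^ 2 * (M + 1) ^ (β l) * (M + 1) ^ (β l)) * B with hEdef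
  have hE0 : (0:ℝ) ≤ E := by
    refine Finset.sum_nonneg fun l _ => ?_
    have : (0:ℝ) ≤ (β l : ℝ) ^ 2 * (M + 1) ^ (β l) * (M + 1) ^ (β l) :=
      mul_nonneg (mul_nonneg (sq_nonneg _) (pow_nonneg (by linarith) _))
        (pow_nonneg (by linarith) _)
    exact mul_nonneg (mul_nonneg (abs_nonneg _) this) hB0
  refine ⟨|A| * E, ?_⟩
  intro ε hε hε1 noise hnoise Sbar hSbar0 hS h
  have hpt : ∀ p ∈ (Finset.univ : Finset (Fin Nx × Fin Nt)),
      |w h p * ((∑ l, (-1 : ℝ) ^ (α l) * c l * (uval p.1 p.2 + noise p.1 p.2) ^ (β l) *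
            iteratedDeriv (α l) (fun s => φ h s (t p.2)) (x p.1))
          - (uval p.1 p.2 + noise p.1 p.2) * deriv (fun s => φ h (x p.1) s) (t p.2))
        - w h p * ((∑ l, (-1 : ℝ) ^ (α l) * c l * (uval p.1 p.2) ^ (β l) *
            iteratedDeriv (α l) (fun s => φ h s (t p.2)) (x p.1))
          - uval p.1 p.2 * deriv (fun s => φ h (x p.1) s) (t p.2))|
      ≤ w h p * (Sbar * ε + E * ε ^ 2) := by
    intro p _
    rw [← mul_sub, abs_mul, abs_of_nonneg (hw h p)]
    rcases eq_or_ne (w h p) 0 with h0 | h0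
    · simp [h0]
    refine mul_le_mul_of_nonneg_left ?_ (hw h p)
    have habs : |uval p.1 p.2 + noise p.1 p.2| ≤ M + 1 := by
      have t1 := abs_add_le (uval p.1 p.2) (noise p.1 p.2)
      have t2 := hnoise p.1 p.2
      have t3 := hMle p.1 p.2
      linarith
    have hptw := pointwise_bound Nf (fun l => (-1 : ℝ) ^ (α l)) c
      (fun l => iteratedDeriv (α l) (fun s => φ h s (t p.2)) (x p.1)) β
      (uval p.1 p.2) (noise p.1 p.2) (deriv (fun s => φ h (x p.1) s) (t p.2))
      Sbar (M + 1) B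
      (fun l => by rw [abs_pow, abs_neg, abs_one, one_pow])
      (by linarith)
      (by have := hMle p.1 p.2; linarith)
      habs hB0 (fun l => hBle h p l)
      (hS h p.1 p.2 h0)
    refine hptw.trans ?_
    rw [← hEdef]
    have h1 : Sbar * |noise p.1 p.2| ≤ Sbar * ε :=
      mul_le_mul_of_nonneg_left (hnoise p.1 p.2) hSbar0
    have h2 : (noise p.1 p.2) ^ 2 ≤ ε ^ 2 := by
      have t2 := hnoise p.1 p.2
      nlinarith [abs_nonneg (noise p.1 p.2), sq_abs (noise p.1 p.2)]
    have h3 : E * (noise p.1 p.2) ^ 2 ≤ E * ε ^ 2 := mul_le_mul_of_nonneg_left h2 hE0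
    linarith
  rw [← Finset.sum_sub_distrib]
  refine (Finset.abs_sum_le_sum_abs _ _).trans ?_
  refine (Finset.sum_le_sum hpt).trans ?_
  rw [← Finset.sum_mul]
  have hpos : (0:ℝ) ≤ Sbar * ε + E * ε ^ 2 :=
    add_nonneg (mul_nonneg hSbar0 hε) (mul_nonneg hE0 (sq_nonneg ε))
  have hstep : (∑ p : Fin Nx × Fin Nt, w h p) * (Sbar * ε + E * ε ^ 2)
      ≤ A * (Sbar * ε + E * ε ^ 2) := mul_le_mul_of_nonneg_right (hA h) hpos
  refine hstep.trans ?_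
  have hAabs : A ≤ |A| := le_abs_self A
  nlinarith [mul_nonneg hE0 (sq_nonneg ε), mul_nonneg (sub_nonneg.mpr hAabs) (mul_nonneg hE0 (sq_nonneg ε))]
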